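/- Let (ξ_l)_{l≥0} be a sequence of independent, integrable real-valued random variables on a probability space, and let L be an ℕ-valued random variable, independent of the sequence, with probability mass function p satisfying p(l) > 0 for every l ≥ 0. Suppose there are real numbers (a_l)_{l≥0} and a real number a such that E[ξ_0] = a_0, E[ξ_l] = a_l − a_{l−1} for every l ≥ 1, and a_l → a as l → ∞. If Σ_{l≥0} E[ξ_l²]/p(l) < ∞, then the single-term estimator Z := ξ_L / p(L) is square-integrable, E[Z] = a, and E[Z²] = Σ_{l≥0} E[ξ_l²]/p(l); in particular Z is an unbiased estimator of a with finite variance. -/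

import Mathlib

open MeasureTheory ProbabilityTheory Filter

lemma aux_setIntegral_indep {Ω : Type*} [MeasurableSpace Ω] (P : Measure Ω)
    [IsProbabilityMeasure P] (L : Ω → ℕ) (hL : Measurable L) (l : ℕ)
    (Y : Ω → ℝ) (hY : AEStronglyMeasurable Y P) (hind : IndepFun L Y P) :
    ∫ ω in L ⁻¹' {l}, Y ω ∂P = (P (L ⁻¹' {l})).toReal * ∫ ω, Y ω ∂P := by
  have hA : MeasurableSet (L ⁻¹' {l}) := hL (measurableSet_singleton l)
  have hφ : Measurable (({l} : Set ℕ).indicator (fun _ => (1:ℝ))) :=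
    measurable_one.indicator (measurableSet_singleton l)
  have hXind : IndepFun (fun ω => ({l} : Set ℕ).indicator (fun _ => (1:ℝ)) (L ω)) Y P :=
    hind.comp hφ measurable_id
  have h2 : ∫ ω, (({l} : Set ℕ).indicator (fun _ => (1:ℝ)) (L ω)) * Y ω ∂P
      = (∫ ω, ({l} : Set ℕ).indicator (fun _ => (1:ℝ)) (L ω) ∂P) * ∫ ω, Y ω ∂P :=
    hXind.integral_fun_mul_eq_mul_integral (hφ.comp hL).aestronglyMeasurable hY
  have h3 : (fun ω => ({l} : Set ℕ).indicator (fun _ => (1:ℝ)) (L ω))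
      = (L ⁻¹' {l}).indicator (fun _ => (1:ℝ)) := by
    funext ω
    by_cases h : L ω = l <;> simp [Set.indicator_apply, h]
  have h4 : ∫ ω, ({l} : Set ℕ).indicator (fun _ => (1:ℝ)) (L ω) ∂P = (P (L ⁻¹' {l})).toReal := by
    rw [h3]
    exact integral_indicator_one hA
  have h5 : ∫ ω in L ⁻¹' {l}, Y ω ∂P
      = ∫ ω, (({l} : Set ℕ).indicator (fun _ => (1:ℝ)) (L ω)) * Y ω ∂P := by
    rw [← integral_indicator hA]
    congr 1
    funext ω
    by_cases h : L ω = l <;> simp [Set.indicator_apply, h]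
  rw [h5, h2, h4]

/-- the single-term randomized estimator `Z = ξ_L / p(L)` is
square-integrable, unbiased for `a = lim a_l`, and its second moment equals
`∑_l E[ξ_l²]/p(l)`. -/
theorem single_term_estimator_unbiased_finite_variance
    {Ω : Type*} [MeasurableSpace Ω] (P : Measure Ω) [IsProbabilityMeasure P]
    (ξ : ℕ → Ω → ℝ) (hξmeas : ∀ l, Measurable (ξ l))
    (hξint : ∀ l, Integrable (ξ l) P)
    (hξindep : iIndepFun ξ P)
    (L : Ω → ℕ) (hLmeas : Measurable L)
    (p : ℕ → ℝ) (hp_pos : ∀ l, 0 < p l) (hp_sum : ∑' l, p l = 1)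
    (hLlaw : ∀ l, P {ω | L ω = l} = ENNReal.ofReal (p l))
    (hLindep : IndepFun L (fun ω => fun l => ξ l ω) P)
    (a : ℕ → ℝ) (alim : ℝ)
    (ha0 : ∫ ω, ξ 0 ω ∂P = a 0)
    (hainc : ∀ l : ℕ, 1 ≤ l → ∫ ω, ξ l ω ∂P = a l - a (l - 1))
    (halim : Tendsto a atTop (nhds alim))
    (hξ2 : ∀ l, MemLp (ξ l) 2 P)
    (hsum : Summable (fun l => (∫ ω, (ξ l ω) ^ 2 ∂P) / p l)) :
    MemLp (fun ω => ξ (L ω) ω / p (L ω)) 2 P ∧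
    ∫ ω, ξ (L ω) ω / p (L ω) ∂P = alim ∧
    ∫ ω, (ξ (L ω) ω / p (L ω)) ^ 2 ∂P = ∑' l, (∫ ω, (ξ l ω) ^ 2 ∂P) / p l := by
  set Z : Ω → ℝ := fun ω => ξ (L ω) ω / p (L ω) with hZdef
  set A : ℕ → Set Ω := fun l => L ⁻¹' {l} with hAdef
  have hA : ∀ l, MeasurableSet (A l) := fun l => hLmeas (measurableSet_singleton l)
  have hAlaw : ∀ l, (P (A l)).toReal = p l := by
    intro l
    have : A l = {ω | L ω = l} := rfl
    rw [this, hLlaw l, ENNReal.toReal_ofReal (hp_pos l).le]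
  have hdisj : Pairwise (Function.onFun Disjoint A) := by
    intro i j hij
    refine Set.disjoint_left.mpr fun ω hi hj => hij ?_
    have h1 : L ω = i := hi
    have h2 : L ω = j := hj
    rw [← h1, h2]
  have hcover : (⋃ l, A l) = Set.univ := by
    ext ω; simp [hAdef]
  -- measurability of Z
  have hZmeas : Measurable Z := by
    have h1 : Measurable (fun q : Ω × ℕ => ξ q.2 q.1 / p q.2) := by
      apply measurable_from_prod_countable_left
      intro n
      exact (hξmeas n).div_const (p n)
    exact h1.comp (measurable_id.prodMk hLmeas)
  -- independence facts
  have hindep1 : ∀ l, IndepFun L (ξ l) P := by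
    intro l
    exact hLindep.comp measurable_id (measurable_pi_apply l)
  have hindep2 : ∀ l, IndepFun L (fun ω => (ξ l ω) ^ 2) P := by
    intro l
    exact hLindep.comp measurable_id ((measurable_pi_apply l).pow_const 2)
  -- Z agrees with ξ l / p l on A l
  have hZeq : ∀ l, Set.EqOn (fun ω => ξ l ω / p l) Z (A l) := by
    intro l ω hω
    have h1 : L ω = l := hω
    show ξ l ω / p l = ξ (L ω) ω / p (L ω)
    rw [h1]
  have hZ2eq : ∀ l, Set.EqOn (fun ω => (ξ l ω / p l) ^ 2) (fun ω => (Z ω) ^ 2) (A l) := by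
    intro l ω hω
    have h1 : L ω = l := hω
    show (ξ l ω / p l) ^ 2 = (ξ (L ω) ω / p (L ω)) ^ 2
    rw [h1]
  -- set integrals of Z and Z^2
  have hsetint : ∀ l, ∫ ω in A l, Z ω ∂P = ∫ ω, ξ l ω ∂P := by
    intro l
    rw [← setIntegral_congr_fun (hA l) (hZeq l)]
    have h1 : ∫ ω in A l, ξ l ω / p l ∂P = (∫ ω in A l, ξ l ω ∂P) / p l :=
      integral_div _ _
    rw [h1, aux_setIntegral_indep P L hLmeas l (ξ l) (hξmeas l).aestronglyMeasurable
      (hindep1 l), hAlaw l]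
    exact mul_div_cancel_left₀ _ (hp_pos l).ne'
  have hsetint2 : ∀ l, ∫ ω in A l, (Z ω) ^ 2 ∂P = (∫ ω, (ξ l ω) ^ 2 ∂P) / p l := by
    intro l
    rw [← setIntegral_congr_fun (hA l) (hZ2eq l)]
    have h1 : ∀ ω, (ξ l ω / p l) ^ 2 = (ξ l ω) ^ 2 / (p l) ^ 2 := by
      intro ω; rw [div_pow]
    simp_rw [h1]
    rw [integral_div, aux_setIntegral_indep P L hLmeas l (fun ω => (ξ l ω) ^ 2)
      ((hξmeas l).pow_const 2).aestronglyMeasurable (hindep2 l), hAlaw l]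
    have hp : p l ≠ 0 := (hp_pos l).ne'
    field_simp
  -- integrability of Z^2
  have hZ2intOn : ∀ l, IntegrableOn (fun ω => (Z ω) ^ 2) (A l) P := by
    intro l
    have hbase : Integrable (fun ω => (ξ l ω / p l) ^ 2) P := by
      simp_rw [div_pow]
      exact (hξ2 l).integrable_sq.div_const _
    exact hbase.integrableOn.congr_fun (hZ2eq l) (hA l)
  have hZ2int : Integrable (fun ω => (Z ω) ^ 2) P := by
    rw [← integrableOn_univ, ← hcover]
    apply integrableOn_iUnion_of_summable_integral_norm hZ2intOn
    have heq : ∀ l, ∫ ω in A l, ‖(Z ω) ^ 2‖ ∂P = (∫ ω, (ξ l ω) ^ 2 ∂P) / p l := by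
      intro l
      rw [← hsetint2 l]
      apply setIntegral_congr_fun (hA l)
      intro ω _
      show ‖Z ω ^ 2‖ = Z ω ^ 2
      rw [Real.norm_eq_abs, abs_of_nonneg (sq_nonneg _)]
    rw [show (fun l => ∫ ω in A l, ‖(Z ω) ^ 2‖ ∂P) = fun l => (∫ ω, (ξ l ω) ^ 2 ∂P) / p l
      from funext heq]
    exact hsum
  have hZmem : MemLp Z 2 P :=
    (memLp_two_iff_integrable_sq hZmeas.aestronglyMeasurable).mpr hZ2int
  have hZint : Integrable Z P := hZmem.integrable one_le_two
  refine ⟨hZmem, ?_, ?_⟩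
  · -- first moment
    have hHS : HasSum (fun l => ∫ ω in A l, Z ω ∂P) (∫ ω, Z ω ∂P) := by
      have hIOn : IntegrableOn Z (⋃ l, A l) P := by
        rw [hcover]; exact integrableOn_univ.mpr hZint
      have := hasSum_integral_iUnion hA hdisj hIOn
      rwa [hcover, Measure.restrict_univ] at this
    rw [show (fun l => ∫ ω in A l, Z ω ∂P) = fun l => ∫ ω, ξ l ω ∂P from funext hsetint] at hHS
    have hpartial : ∀ n, ∑ l ∈ Finset.range (n + 1), ∫ ω, ξ l ω ∂P = a n := by
      intro n
      induction n with
      | zero => simpa using ha0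
      | succ k ih =>
        rw [Finset.sum_range_succ, ih, hainc (k + 1) (Nat.le_add_left 1 k)]
        simp
    have h1 : Tendsto (fun n => ∑ l ∈ Finset.range (n + 1), ∫ ω, ξ l ω ∂P) atTop
        (nhds (∫ ω, Z ω ∂P)) :=
      hHS.tendsto_sum_nat.comp (tendsto_add_atTop_nat 1)
    rw [show (fun n => ∑ l ∈ Finset.range (n + 1), ∫ ω, ξ l ω ∂P) = a from funext hpartial] at h1
    exact tendsto_nhds_unique h1 halim
  · -- second moment
    have hHS : HasSum (fun l => ∫ ω in A l, (Z ω) ^ 2 ∂P) (∫ ω, (Z ω) ^ 2 ∂P) := by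
      have hIOn : IntegrableOn (fun ω => (Z ω) ^ 2) (⋃ l, A l) P := by
        rw [hcover]; exact integrableOn_univ.mpr hZ2int
      have := hasSum_integral_iUnion hA hdisj hIOn
      rwa [hcover, Measure.restrict_univ] at this
    rw [show (fun l => ∫ ω in A l, (Z ω) ^ 2 ∂P) = fun l => (∫ ω, (ξ l ω) ^ 2 ∂P) / p l
      from funext hsetint2] at hHS
    exact hHS.tsum_eq.symm
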